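/- Fix n ≥ 0 and let M_n⁺ = {(R,m,t) ∈ (ℕ →₀ ℕ) × ℤ × ℤ : R i = 0 for all i > n, and t ≥ 0}. Let S_n⁺ = {(R,m,t) ∈ M_n⁺ : m ≠ 0, v₂(m) ≤ n, and R i = 0 for every i < v₂(m)} and T_n⁺ = {(R,m,t) ∈ M_n⁺ : R ≠ 0, 2^(min(R)+1) divides m, and t ≥ 2^(min(R)+1) − 1} (the targets whose corresponding source has nonnegative filtration). Then S_n⁺ and T_n⁺ are disjoint, Φ restricts to a bijection from S_n⁺ onto T_n⁺, and the complement of S_n⁺ ∪ T_n⁺ in M_n⁺ is exactly {(R,m,t) ∈ M_n⁺ : R = 0 and 2^(n+1) divides m} ∪ {(R,m,t) ∈ M_n⁺ : R ≠ 0, 2^(min(R)+1) divides m, and 0 ≤ t ≤ 2^(min(R)+1) − 2}. (These survivors index the additive generators of the Borel cohomology coefficients F(Eℤ/2₊, BPℝ⟨n⟩)_⋆ = (ℤ_(2)[v_k σ^(l·2^(k+1)), a]/∼) ⊕ ℤ/2[σ^(2^(n+1)), σ^(−2^(n+1)), a] of Theorem 2.1(2).) -/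

import Mathlib

/-!
Monomials `v_R σ^m a^t` in the E₁-term `BP⟨n⟩_*[σ, σ⁻¹, a]` of the Borel
cohomology spectral sequence for the Real Johnson–Wilson spectrum `BPℝ⟨n⟩` are
encoded by triples `(R, m, t) ∈ (ℕ →₀ ℕ) × ℤ × ℤ` with `R` supported in
`{0, …, n}` and `t ≥ 0`.
-/

/-- The 2-adic valuation of an integer. -/
noncomputable def v2 (m : ℤ) : ℕ := padicValInt 2 m

/-- `min R`: the least `i` with `R i ≠ 0` (for `R ≠ 0`). -/
noncomputable def minR (R : ℕ →₀ ℕ) : ℕ := sInf {i | R i ≠ 0}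

/-- The differential on monomials:
`Φ(R, m, t) = (R + e_{v₂(m)}, m + 2^(v₂(m)), t + 2^(v₂(m)+1) − 1)`. -/
noncomputable def Φ : (ℕ →₀ ℕ) × ℤ × ℤ → (ℕ →₀ ℕ) × ℤ × ℤ := fun x =>
  (x.1 + Finsupp.single (v2 x.2.1) 1,
   x.2.1 + 2 ^ v2 x.2.1,
   x.2.2 + 2 ^ (v2 x.2.1 + 1) - 1)

/-- `Mp n`: monomials of `BP⟨n⟩_*[σ, σ⁻¹, a]`, i.e. `R i = 0` for `i > n`,
and `t ≥ 0`. -/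
def Mp (n : ℕ) : Set ((ℕ →₀ ℕ) × ℤ × ℤ) := {x | (∀ i > n, x.1 i = 0) ∧ 0 ≤ x.2.2}

/-- `Sp n`: the sources of nonzero differentials in the Borel cohomology
spectral sequence for `BPℝ⟨n⟩`: `m ≠ 0`, `v₂(m) ≤ n`, and `R i = 0` for every
`i < v₂(m)`. -/
def Sp (n : ℕ) : Set ((ℕ →₀ ℕ) × ℤ × ℤ) :=
  {x ∈ Mp n | x.2.1 ≠ 0 ∧ v2 x.2.1 ≤ n ∧ ∀ i < v2 x.2.1, x.1 i = 0}

/-- `Tp n`: the targets whose corresponding source has nonnegative filtration: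
`R ≠ 0`, `2^(min(R)+1) ∣ m`, and `t ≥ 2^(min(R)+1) − 1`. -/
def Tp (n : ℕ) : Set ((ℕ →₀ ℕ) × ℤ × ℤ) :=
  {x ∈ Mp n | x.1 ≠ 0 ∧ (2 : ℤ) ^ (minR x.1 + 1) ∣ x.2.1 ∧
    (2 : ℤ) ^ (minR x.1 + 1) - 1 ≤ x.2.2}


lemma two_pow_dvd_iff {s : ℕ} {m : ℤ} : (2:ℤ)^s ∣ m ↔ m = 0 ∨ s ≤ v2 m := by
  have := padicValInt_dvd_iff (p := 2) s m
  simpa [v2] using this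

lemma v2_dvd (m : ℤ) : (2:ℤ) ^ v2 m ∣ m := two_pow_dvd_iff.mpr (Or.inr le_rfl)

lemma not_dvd_succ {m : ℤ} (hm : m ≠ 0) : ¬ (2:ℤ)^(v2 m + 1) ∣ m := by
  rw [two_pow_dvd_iff]
  push_neg
  exact ⟨hm, by omega⟩

lemma v2_eq {m : ℤ} {s : ℕ} (hm : m ≠ 0) (h1 : (2:ℤ)^s ∣ m) (h2 : ¬(2:ℤ)^(s+1) ∣ m) :
    v2 m = s := by
  rw [two_pow_dvd_iff] at h1 h2
  omega

lemma phi_dvd {m : ℤ} (hm : m ≠ 0) : (2:ℤ)^(v2 m + 1) ∣ m + 2^(v2 m) := by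
  have hns := not_dvd_succ hm
  obtain ⟨u, hu⟩ := v2_dvd m
  set s := v2 m with hs
  have hodd : ¬ (2:ℤ) ∣ u := by
    rintro ⟨k, hk⟩
    exact hns ⟨k, by rw [hu, hk, pow_succ]; ring⟩
  have h2 : (2:ℤ) ∣ u + 1 := by omega
  obtain ⟨k, hk⟩ := h2
  exact ⟨k, by rw [hu, pow_succ]; linear_combination (2:ℤ)^s * hk⟩

lemma pow_not_dvd_pow {s : ℕ} : ¬ (2:ℤ)^(s+1) ∣ 2^s := by
  intro hd
  have h1 := Int.le_of_dvd (by positivity) hd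
  have h2 : (2:ℤ)^s < 2^(s+1) := by
    have := pow_lt_pow_right₀ (by norm_num : (1:ℤ) < 2) (lt_add_one s)
    exact this
  omega

lemma sub_pow_spec {s : ℕ} {m' : ℤ} (h : (2:ℤ)^(s+1) ∣ m') :
    m' - 2^s ≠ 0 ∧ v2 (m' - 2^s) = s := by
  have hne0 : m' - 2^s ≠ 0 := by
    intro h0
    exact pow_not_dvd_pow (by rwa [show m' = 2^s by omega] at h)
  refine ⟨hne0, v2_eq hne0 ?_ ?_⟩
  · exact dvd_sub (dvd_trans (pow_dvd_pow 2 s.le_succ) h) dvd_rfl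
  · intro hd
    exact pow_not_dvd_pow (by simpa using dvd_sub h hd)

lemma minR_apply_ne {R : ℕ →₀ ℕ} (hR : R ≠ 0) : R (minR R) ≠ 0 := by
  obtain ⟨i, hi⟩ := Finsupp.ne_iff.mp hR
  have hne : {i | R i ≠ 0}.Nonempty := ⟨i, by simpa using hi⟩
  have := Nat.sInf_mem hne
  exact this

lemma minR_le {R : ℕ →₀ ℕ} {i : ℕ} (h : R i ≠ 0) : minR R ≤ i := Nat.sInf_le h

lemma apply_eq_zero_of_lt_minR {R : ℕ →₀ ℕ} {i : ℕ} (h : i < minR R) : R i = 0 := by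
  by_contra hc
  exact absurd (minR_le hc) (by omega)

lemma minR_add_single {R : ℕ →₀ ℕ} {s : ℕ} (h : ∀ i < s, R i = 0) :
    minR (R + Finsupp.single s 1) = s := by
  have hmem : s ∈ {i | (R + Finsupp.single s 1 : ℕ →₀ ℕ) i ≠ 0} := by simp
  unfold minR
  refine le_antisymm (Nat.sInf_le hmem) (le_csInf ⟨s, hmem⟩ ?_)
  intro i hi
  by_contra hc
  push_neg at hc
  exact hi (by simp [Finsupp.single_apply, h i hc, (show ¬ s = i by omega)])

lemma minR_le_n {R : ℕ →₀ ℕ} {n : ℕ} (hR : R ≠ 0) (hs : ∀ i > n, R i = 0) :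
    minR R ≤ n := by
  obtain ⟨i, hi⟩ := Finsupp.ne_iff.mp hR
  simp only [Finsupp.coe_zero, Pi.zero_apply] at hi
  have : i ≤ n := by by_contra hc; exact hi (hs i (by omega))
  exact le_trans (minR_le hi) this

lemma v2_le_minR {R : ℕ →₀ ℕ} {m : ℤ} (hm : m ≠ 0) (hR : R ≠ 0)
    (hlt : ∀ i < v2 m, R i = 0) : v2 m ≤ minR R := by
  by_contra hc
  exact minR_apply_ne hR (hlt _ (by omega))

theorem borel_spectral_sequence_BPRn (n : ℕ) :
    -- `Sp n` and `Tp n` are disjoint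
    Disjoint (Sp n) (Tp n) ∧
    -- `Φ` restricts to a bijection from `Sp n` onto `Tp n`
    Set.BijOn Φ (Sp n) (Tp n) ∧
    -- the survivors: the complement of `Sp n ∪ Tp n` in `Mp n` is exactly the
    -- set of monomials with `R = 0` and `2^(n+1) ∣ m`, together with those
    -- with `R ≠ 0`, `2^(min(R)+1) ∣ m` and `0 ≤ t ≤ 2^(min(R)+1) − 2`
    Mp n \ (Sp n ∪ Tp n) =
      {x ∈ Mp n | x.1 = 0 ∧ (2 : ℤ) ^ (n + 1) ∣ x.2.1} ∪
      {x ∈ Mp n | x.1 ≠ 0 ∧ (2 : ℤ) ^ (minR x.1 + 1) ∣ x.2.1 ∧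
        0 ≤ x.2.2 ∧ x.2.2 ≤ (2 : ℤ) ^ (minR x.1 + 1) - 2} := by
  refine ⟨?_, ⟨?_, ?_, ?_⟩, ?_⟩
  · -- disjoint
    rw [Set.disjoint_left]
    rintro ⟨R, m, t⟩ ⟨hM, hm, hv, hlt⟩ ⟨hM', hR0, hdvd, hge⟩
    dsimp only at *
    have h1 := v2_le_minR hm hR0 hlt
    rcases two_pow_dvd_iff.mp hdvd with h | h
    · exact hm h
    · omega
  · -- MapsTo
    rintro ⟨R, m, t⟩ ⟨⟨hsupp, ht⟩, hm, hv, hlt⟩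
    dsimp only at hsupp ht hm hv hlt
    have hmin : minR (R + Finsupp.single (v2 m) 1) = v2 m := minR_add_single hlt
    have hpow : (1:ℤ) ≤ 2 ^ (v2 m + 1) := one_le_pow₀ (by norm_num)
    refine ⟨⟨?_, ?_⟩, ?_, ?_, ?_⟩
    · intro i hi
      simp only [Φ]
      rw [Finsupp.add_apply, hsupp i hi, Finsupp.single_apply, if_neg (by omega)]
      rfl
    · simp only [Φ]
      linarith
    · simp only [Φ]
      intro h0
      have := congrArg (fun f : ℕ →₀ ℕ => f (v2 m)) h0
      simp at this
    · simp only [Φ, hmin]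
      exact phi_dvd hm
    · simp only [Φ, hmin]
      linarith
  · -- InjOn
    rintro ⟨R, m, t⟩ ⟨hM, hm, hv, hlt⟩ ⟨R', m', t'⟩ ⟨hM', hm', hv', hlt'⟩ heq
    dsimp only at hm hv hlt hm' hv' hlt'
    simp only [Φ, Prod.mk.injEq] at heq
    obtain ⟨h1, h2, h3⟩ := heq
    have hs : v2 m = v2 m' := by
      have := congrArg minR h1
      rwa [minR_add_single hlt, minR_add_single hlt'] at this
    rw [hs] at h1 h2 h3
    simp only [Prod.mk.injEq]
    exact ⟨add_right_cancel h1, by linarith, by linarith⟩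
  · -- SurjOn
    rintro ⟨R', m', t'⟩ ⟨⟨hsupp, ht⟩, hR0, hdvd, hge⟩
    dsimp only at hsupp ht hR0 hdvd hge
    obtain ⟨hmne, hv2⟩ := sub_pow_spec hdvd
    have hRs : R' (minR R') ≠ 0 := minR_apply_ne hR0
    have hpow : (1:ℤ) ≤ 2 ^ (minR R' + 1) := one_le_pow₀ (by norm_num)
    refine ⟨(R' - Finsupp.single (minR R') 1, m' - 2 ^ minR R',
      t' - (2 ^ (minR R' + 1) - 1)), ⟨⟨?_, ?_⟩, hmne, ?_, ?_⟩, ?_⟩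
    · intro i hi
      rw [Finsupp.tsub_apply, hsupp i hi]
      simp
    · simp only
      linarith
    · simp only
      rw [hv2]
      exact minR_le_n hR0 hsupp
    · intro i hi
      dsimp only at hi ⊢
      rw [hv2] at hi
      rw [Finsupp.tsub_apply, apply_eq_zero_of_lt_minR hi]
      simp
    · simp only [Φ, hv2, Prod.mk.injEq]
      refine ⟨?_, by ring, by ring⟩
      ext i
      rcases eq_or_ne i (minR R') with rfl | hne
      · simp only [Finsupp.add_apply, Finsupp.tsub_apply, Finsupp.single_eq_same]
        omega
      · simp [Finsupp.add_apply, Finsupp.tsub_apply,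
          Finsupp.single_eq_of_ne' (Ne.symm hne)]
  · -- survivors
    ext ⟨R, m, t⟩
    simp only [Sp, Tp, Mp, Set.mem_diff, Set.mem_union, Set.mem_setOf_eq, not_or]
    constructor
    · rintro ⟨⟨hsupp, ht⟩, hnS, hnT⟩
      rcases eq_or_ne R 0 with rfl | hR0
      · left
        refine ⟨⟨hsupp, ht⟩, rfl, ?_⟩
        rcases eq_or_ne m 0 with rfl | hm
        · exact dvd_zero _
        · rw [two_pow_dvd_iff]
          right
          by_contra hc
          exact hnS ⟨⟨hsupp, ht⟩, hm, by omega, fun i _ => by simp⟩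
      · right
        have hsn : minR R ≤ n := minR_le_n hR0 hsupp
        have hdvd : (2:ℤ) ^ (minR R + 1) ∣ m := by
          by_contra hnd
          have hm : m ≠ 0 := by rintro rfl; exact hnd (dvd_zero _)
          have hv : v2 m ≤ minR R := by
            rw [two_pow_dvd_iff] at hnd
            push_neg at hnd
            omega
          exact hnS ⟨⟨hsupp, ht⟩, hm, by omega,
            fun i hi => apply_eq_zero_of_lt_minR (by omega)⟩
        refine ⟨⟨hsupp, ht⟩, hR0, hdvd, ht, ?_⟩
        by_contra hc
        push_neg at hc
        exact hnT ⟨⟨hsupp, ht⟩, hR0, hdvd, by linarith⟩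
    · rintro (⟨⟨hsupp, ht⟩, hR0, hdvd⟩ | ⟨⟨hsupp, ht⟩, hR0, hdvd, ht0, ht1⟩)
      · refine ⟨⟨hsupp, ht⟩, ?_, ?_⟩
        · rintro ⟨-, hm, hv, -⟩
          rcases two_pow_dvd_iff.mp hdvd with h | h
          · exact hm h
          · omega
        · rintro ⟨-, hR0', -⟩
          exact hR0' hR0
      · refine ⟨⟨hsupp, ht⟩, ?_, ?_⟩
        · rintro ⟨-, hm, hv, hlt⟩
          have h1 := v2_le_minR hm hR0 hlt
          rcases two_pow_dvd_iff.mp hdvd with h | h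
          · exact hm h
          · omega
        · rintro ⟨-, -, -, hge⟩
          linarith
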